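/- Let F be a pure 1-dimensional sheaf on a smooth surface X with support C = C₁ ∪ C₂ a reducible curve such that C₁ ∩ C₂ is 0-dimensional. Let F_i^{tf} be the quotient of F|_{C_i} by its maximal 0-dimensional subsheaf. Then there are exact sequences 0 → F₁^{tf}(−C₂) → F → F|_{C₂} → 0 and 0 → F₂^{tf}(−C₁) → F → F|_{C₁} → 0. -/

import Mathlib

open Submodule LinearMap

private lemma IsFiniteLength.of_surj {R M N : Type*} [Ring R] [AddCommGroup M] [Module R M]
    [AddCommGroup N] [Module R N] (g : M →ₗ[R] N) (hs : Function.Surjective g)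
    (h : IsFiniteLength R M) : IsFiniteLength R N := by
  rw [isFiniteLength_iff_isNoetherian_isArtinian] at h ⊢
  obtain ⟨h1, h2⟩ := h
  exact ⟨isNoetherian_of_surjective g (range_eq_top.2 hs),
    isArtinian_of_surjective M g hs⟩

private lemma key_half {R : Type*} [CommRing R] {M : Type*} [AddCommGroup M] [Module R M]
    (δ₁ δ₂ : R)
    (h0dim : IsFiniteLength R (R ⧸ Ideal.span {δ₁, δ₂}))
    (hsupp : ∀ x : M, (δ₁ * δ₂) • x = 0)
    (hpure : ∀ N : Submodule R M, IsFiniteLength R ↥N → N = ⊥) :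
    Nonempty
      ((↥(LinearMap.range (δ₂ • (LinearMap.id : M →ₗ[R] M)))) ≃ₗ[R]
        ((M ⧸ LinearMap.range (δ₁ • (LinearMap.id : M →ₗ[R] M))) ⧸
          sSup {T : Submodule R (M ⧸ LinearMap.range (δ₁ • (LinearMap.id : M →ₗ[R] M))) |
            IsFiniteLength R ↥T})) := by
  set f : M →ₗ[R] M := δ₂ • (LinearMap.id : M →ₗ[R] M) with hf
  set A : Submodule R M := LinearMap.range (δ₁ • (LinearMap.id : M →ₗ[R] M)) with hA
  set T : Submodule R (M ⧸ A) := sSup {T : Submodule R (M ⧸ A) | IsFiniteLength R ↥T} with hT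
  -- A ≤ ker f
  have hAf : A ≤ ker f := by
    rintro _ ⟨x, rfl⟩
    simp only [hf, mem_ker, LinearMap.smul_apply, LinearMap.id_coe, id_eq, smul_smul]
    rw [mul_comm]
    exact hsupp x
  -- the descended map ḡ : M⧸A → M
  set g : (M ⧸ A) →ₗ[R] M := A.liftQ f hAf with hg
  -- T ≤ ker g
  have hTg : T ≤ ker g := by
    refine sSup_le fun S hS => ?_
    have hfl : IsFiniteLength R ↥(Submodule.map g S) := by
      have h1 : LinearMap.range (g ∘ₗ S.subtype) = Submodule.map g S := by
        rw [LinearMap.range_comp, Submodule.range_subtype]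
      have := IsFiniteLength.of_surj (g ∘ₗ S.subtype).rangeRestrict
        (g ∘ₗ S.subtype).surjective_rangeRestrict hS
      rwa [h1] at this
    have hbot := hpure _ hfl
    intro z hz
    rw [mem_ker]
    have : g z ∈ Submodule.map g S := ⟨z, hz, rfl⟩
    rw [hbot] at this
    simpa using this
  -- π : M → (M⧸A)⧸T
  set π : M →ₗ[R] ((M ⧸ A) ⧸ T) := T.mkQ ∘ₗ A.mkQ with hπ
  have hπs : Function.Surjective π := (Submodule.mkQ_surjective T).comp (Submodule.mkQ_surjective A)
  have hker : ker f = ker π := by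
    apply le_antisymm
    · intro x hx
      have hx' : δ₂ • x = 0 := by simpa [hf] using hx
      simp only [hπ, mem_ker, LinearMap.comp_apply, Submodule.mkQ_apply,
        Submodule.Quotient.mk_eq_zero]
      set y : M ⧸ A := A.mkQ x with hy
      have hspanker : Ideal.span {δ₁, δ₂} ≤ ker (LinearMap.toSpanSingleton R (M ⧸ A) y) := by
        rw [Ideal.span_le]
        rintro r (rfl | rfl)
        · rw [SetLike.mem_coe, mem_ker, LinearMap.toSpanSingleton_apply, hy,
            Submodule.mkQ_apply, ← Submodule.Quotient.mk_smul, Submodule.Quotient.mk_eq_zero]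
          exact ⟨x, by simp⟩
        · rw [SetLike.mem_coe, mem_ker, LinearMap.toSpanSingleton_apply, hy,
            Submodule.mkQ_apply, ← Submodule.Quotient.mk_smul, Submodule.Quotient.mk_eq_zero, hx']
          exact Submodule.zero_mem A
      set h' := (Ideal.span {δ₁, δ₂}).liftQ (LinearMap.toSpanSingleton R (M ⧸ A) y) hspanker
        with hh'
      have hr : LinearMap.range h' = Submodule.span R {y} := by
        rw [hh', Submodule.range_liftQ, LinearMap.span_singleton_eq_range]
      have hfl2 : IsFiniteLength R ↥(Submodule.span R {y}) := by
        have := IsFiniteLength.of_surj h'.rangeRestrict h'.surjective_rangeRestrict h0dim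
        rwa [hr] at this
      have hle : Submodule.span R {y} ≤ T := le_sSup hfl2
      exact hle (Submodule.mem_span_singleton_self y)
    · intro x hx
      simp only [hπ, mem_ker, LinearMap.comp_apply, Submodule.mkQ_apply,
        Submodule.Quotient.mk_eq_zero] at hx
      have := hTg hx
      rw [mem_ker] at this ⊢
      rwa [hg, Submodule.liftQ_apply] at this
  exact ⟨(f.quotKerEquivRange).symm.trans ((Submodule.quotEquivOfEq _ _ hker).trans
    (π.quotKerEquivOfSurjective hπs))⟩

/-- Let `F` be a pure 1-dimensional sheaf on a smooth surface `X` with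
support `C = C₁ ∪ C₂` a reducible curve such that `C₁ ∩ C₂` is 0-dimensional.  Let
`F_i^{tf}` be the quotient of `F|_{C_i}` by its maximal 0-dimensional subsheaf.  Then
there are exact sequences `0 → F₁^{tf}(−C₂) → F → F|_{C₂} → 0` and
`0 → F₂^{tf}(−C₁) → F → F|_{C₁} → 0`.

Model (local/algebraic): `R` a ring, `δ₁, δ₂` cutting out `C₁, C₂`; the 0-dimensionality
of `C₁ ∩ C₂` is `IsFiniteLength R (R/(δ₁,δ₂))`; `M` is killed by `δ₁δ₂` (support on `C`)
and pure (no nonzero finite-length submodule).  `F|_{C_i} = M/δ_iM`, and the kernel of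
`M ↠ M/δ_iM` is `δ_iM`; the content of the two exact sequences is that (after the local
trivialization of the twist `O(−C_j)`) the subsheaf `δ₂M = ker(M → F|_{C₂})` is isomorphic
to `F₁^{tf}` = (`M/δ₁M` modulo its maximal finite-length submodule), and symmetrically. -/
theorem reducible_support_exact_sequences
    {R : Type*} [CommRing R] {M : Type*} [AddCommGroup M] [Module R M]
    (δ₁ δ₂ : R)
    (h0dim : IsFiniteLength R (R ⧸ Ideal.span {δ₁, δ₂}))
    (hsupp : ∀ x : M, (δ₁ * δ₂) • x = 0)
    (hpure : ∀ N : Submodule R M, IsFiniteLength R ↥N → N = ⊥) :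
    Nonempty
      ((↥(LinearMap.range (δ₂ • (LinearMap.id : M →ₗ[R] M)))) ≃ₗ[R]
        ((M ⧸ LinearMap.range (δ₁ • (LinearMap.id : M →ₗ[R] M))) ⧸
          sSup {T : Submodule R (M ⧸ LinearMap.range (δ₁ • (LinearMap.id : M →ₗ[R] M))) |
            IsFiniteLength R ↥T})) ∧
    Nonempty
      ((↥(LinearMap.range (δ₁ • (LinearMap.id : M →ₗ[R] M)))) ≃ₗ[R]
        ((M ⧸ LinearMap.range (δ₂ • (LinearMap.id : M →ₗ[R] M))) ⧸
          sSup {T : Submodule R (M ⧸ LinearMap.range (δ₂ • (LinearMap.id : M →ₗ[R] M))) |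
            IsFiniteLength R ↥T})) := by
  have h0dim' : IsFiniteLength R (R ⧸ Ideal.span {δ₂, δ₁}) := by
    rwa [show ({δ₂, δ₁} : Set R) = {δ₁, δ₂} from Set.pair_comm δ₂ δ₁]
  have hsupp' : ∀ x : M, (δ₂ * δ₁) • x = 0 := fun x => by rw [mul_comm]; exact hsupp x
  exact ⟨key_half δ₁ δ₂ h0dim hsupp hpure, key_half δ₂ δ₁ h0dim' hsupp' hpure⟩
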